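/- Let q = p^n, B the trace polynomial x^(q/p) + ... + x, g ∈ F_q[x], A ∈ F_p[x] additive, h ∈ F_p[x]. If f(x) = g(B(x)) + h(B(x))·A(x) permutes F_q and q > p, then h has no roots in F_p and A is injective on ker B. -/

import Mathlib

open Polynomial

lemma aux_card_roots_le {F : Type*} [Field F] [Fintype F] [DecidableEq F]
    (q : F[X]) (hq0 : q ≠ 0) :
    Nat.card {x : F // q.eval x = 0} ≤ q.natDegree := by
  rw [Nat.card_eq_fintype_card, Fintype.card_subtype]
  have hsub : Finset.univ.filter (fun x => q.eval x = 0) ⊆ q.roots.toFinset := by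
    intro x hx
    simp only [Finset.mem_filter] at hx
    simp [Multiset.mem_toFinset, Polynomial.mem_roots', hq0, Polynomial.IsRoot, hx.2]
  exact le_trans (Finset.card_le_card hsub)
    (le_trans (Multiset.toFinset_card_le _) (Polynomial.card_roots' q))

/-- If `f(x) = g(B(x)) + h(B(x))·A(x)` permutes `F_q` and `q > p`, then `h` has no
roots in `F_p` and `A` is injective on `ker B`. -/
theorem stmt_14 (p n : ℕ) (hp : p.Prime) (hn : 0 < n)
    (F : Type*) [Field F] [Fintype F] (hq : Fintype.card F = p ^ n) (hchar : CharP F p)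
    (B : Polynomial F) (hBdef : B = ∑ i ∈ Finset.range n, Polynomial.X ^ (p ^ i))
    (g : Polynomial F)
    (A : Polynomial F)
    (hA : ∃ (m : ℕ) (a : ℕ → F), (∀ i, (a i) ^ p = a i) ∧
      A = ∑ i ∈ Finset.range m, Polynomial.C (a i) * Polynomial.X ^ (p ^ i))
    (h : Polynomial F) (hh : ∀ i, (h.coeff i) ^ p = h.coeff i)
    (hcard : p < Fintype.card F)
    (hf : Function.Bijective
      (fun x : F => g.eval (B.eval x) + h.eval (B.eval x) * A.eval x)) :
    (∀ x : F, x ^ p = x → h.eval x ≠ 0) ∧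
      Set.InjOn (fun x : F => A.eval x) {x : F | B.eval x = 0} := by
  classical
  haveI := Fact.mk hp
  have hp2 : 2 ≤ p := hp.two_le
  -- n ≥ 2
  have hn2 : 2 ≤ n := by
    by_contra hc
    push_neg at hc
    have hn1 : n = 1 := by omega
    subst hn1
    rw [hq, pow_one] at hcard
    omega
  -- additivity of B.eval
  have hBadd : ∀ x y : F, B.eval (x + y) = B.eval x + B.eval y := by
    intro x y
    simp only [hBdef, Polynomial.eval_finset_sum, Polynomial.eval_pow, Polynomial.eval_X]
    rw [← Finset.sum_add_distrib]
    exact Finset.sum_congr rfl fun i _ => add_pow_char_pow x y p i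
  have hpowq : ∀ x : F, x ^ (p ^ n) = x := by
    intro x; rw [← hq]; exact FiniteField.pow_card x
  -- B.eval lands in the fixed field
  have hBfix : ∀ x : F, (B.eval x) ^ p = B.eval x := by
    intro x
    simp only [hBdef, Polynomial.eval_finset_sum, Polynomial.eval_pow, Polynomial.eval_X]
    rw [sum_pow_char]
    have step : ∀ i : ℕ, (x ^ p ^ i) ^ p = x ^ p ^ (i + 1) := by
      intro i; rw [← pow_mul, ← pow_succ]
    calc ∑ i ∈ Finset.range n, (x ^ p ^ i) ^ p
        = ∑ i ∈ Finset.range n, x ^ p ^ (i + 1) :=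
          Finset.sum_congr rfl fun i _ => step i
      _ = (∑ i ∈ Finset.range (n + 1), x ^ p ^ i) - x ^ p ^ 0 := by
          rw [Finset.sum_range_succ']; ring
      _ = (∑ i ∈ Finset.range n, x ^ p ^ i) + x ^ p ^ n - x ^ p ^ 0 := by
          rw [Finset.sum_range_succ]
      _ = ∑ i ∈ Finset.range n, x ^ p ^ i := by
          rw [hpowq x, pow_zero, pow_one]; ring
  have hB0 : B.eval 0 = 0 := by
    simp only [hBdef, Polynomial.eval_finset_sum, Polynomial.eval_pow, Polynomial.eval_X]
    exact Finset.sum_eq_zero fun i _ => zero_pow (pow_ne_zero i hp.pos.ne')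
  -- the additive map φ
  set φ : F →+ F := { toFun := fun x => B.eval x, map_zero' := hB0,
                      map_add' := hBadd } with hφ
  -- B ≠ 0
  have hBne : B ≠ 0 := by
    intro hB
    have hco : B.coeff 1 = 1 := by
      rw [hBdef, Polynomial.finset_sum_coeff,
        Finset.sum_eq_single_of_mem 0 (Finset.mem_range.mpr hn)]
      · simp
      · intro i hi hi0
        rw [Polynomial.coeff_X_pow, if_neg]
        intro h1
        have h2 : p ^ 1 ≤ p ^ i := Nat.pow_le_pow_right hp.pos (by omega)
        rw [pow_one] at h2
        omega
    rw [hB] at hco; simp at hco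
  -- natDegree B ≤ p^(n-1)
  have hBdeg : B.natDegree ≤ p ^ (n - 1) := by
    rw [hBdef]
    apply Polynomial.natDegree_sum_le_of_forall_le
    intro i hi
    rw [Polynomial.natDegree_X_pow]
    exact Nat.pow_le_pow_right hp.pos (by simp at hi; omega)
  -- card of kernel ≤ p^(n-1)
  have hKcard : Nat.card φ.ker ≤ p ^ (n - 1) := by
    have e : Nat.card φ.ker = Nat.card {x : F // B.eval x = 0} :=
      Nat.card_congr (Equiv.subtypeEquivRight fun x => by
        simp only [AddMonoidHom.mem_ker, hφ, AddMonoidHom.coe_mk, ZeroHom.coe_mk])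
    rw [e]
    exact le_trans (aux_card_roots_le B hBne) hBdeg
  -- card of the fixed field ≤ p
  have hfixcard : Nat.card {x : F // x ^ p = x} ≤ p := by
    have hne : (X ^ p - X : F[X]) ≠ 0 := by
      intro hc
      have hco : (X ^ p - X : F[X]).coeff p = 1 := by
        rw [Polynomial.coeff_sub, Polynomial.coeff_X_pow, if_pos rfl,
          Polynomial.coeff_X, if_neg (by omega)]
        ring
      rw [hc] at hco; simp at hco
    have hdeg : (X ^ p - X : F[X]).natDegree ≤ p := by
      refine le_trans (Polynomial.natDegree_sub_le _ _) (max_le ?_ ?_)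
      · rw [Polynomial.natDegree_X_pow]
      · rw [Polynomial.natDegree_X]; omega
    have e : Nat.card {x : F // x ^ p = x}
        = Nat.card {x : F // (X ^ p - X : F[X]).eval x = 0} :=
      Nat.card_congr (Equiv.subtypeEquivRight fun x => by
        rw [Polynomial.eval_sub, Polynomial.eval_pow, Polynomial.eval_X, sub_eq_zero])
    rw [e]
    exact le_trans (aux_card_roots_le _ hne) hdeg
  have hRsub : ∀ y ∈ φ.range, y ^ p = y := by
    rintro y ⟨x, rfl⟩
    exact hBfix x
  have hRcard : Nat.card φ.range ≤ p := by
    refine le_trans ?_ hfixcard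
    refine Nat.card_le_card_of_injective
      (fun y => ⟨(y : F), hRsub y y.2⟩) ?_
    intro a b hab
    apply Subtype.ext
    have h2 := congrArg Subtype.val hab
    simpa using h2
  -- counting
  have hsplit : Nat.card F = Nat.card φ.range * Nat.card φ.ker := by
    rw [AddSubgroup.card_eq_card_quotient_mul_card_addSubgroup φ.ker]
    congr 1
    exact Nat.card_congr (QuotientAddGroup.quotientKerEquivRange φ).toEquiv
  have hcardF : Nat.card F = p ^ n := by rw [Nat.card_eq_fintype_card, hq]
  have hppos : 0 < p ^ (n - 1) := pow_pos hp.pos _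
  have hpn : p * p ^ (n - 1) = p ^ n := by
    rw [← pow_succ']
    congr 1; omega
  have hRp : Nat.card φ.range = p := by
    have h1 : p ^ n ≤ Nat.card φ.range * p ^ (n - 1) := by
      rw [← hcardF, hsplit]
      exact Nat.mul_le_mul_left _ hKcard
    have h3 : p ≤ Nat.card φ.range := by
      by_contra hcn
      push_neg at hcn
      have : Nat.card φ.range * p ^ (n - 1) < p * p ^ (n - 1) :=
        Nat.mul_lt_mul_of_lt_of_le hcn le_rfl hppos
      omega
    omega
  have hKge : p ^ (n - 1) ≤ Nat.card φ.ker := by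
    have heq : Nat.card φ.range * Nat.card φ.ker = p ^ n := by rw [← hsplit, hcardF]
    rw [hRp] at heq
    nlinarith [hp.pos]
  -- surjectivity onto the fixed field
  have hsurj : ∀ c : F, c ^ p = c → ∃ α : F, B.eval α = c := by
    intro c hc
    have hsub : Set.range (fun x : F => B.eval x) ⊆ {x : F | x ^ p = x} := by
      rintro y ⟨x, rfl⟩; exact hBfix x
    have hcard1 : (Set.range (fun x : F => B.eval x)).ncard = p := by
      rw [← Nat.card_coe_set_eq]
      rw [← hRp]
      exact Nat.card_congr (Equiv.setCongr (by
        ext y; simp [AddMonoidHom.mem_range, hφ, Set.mem_range])).symm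
    have hcard2 : ({x : F | x ^ p = x} : Set F).ncard ≤ p := by
      rw [← Nat.card_coe_set_eq]
      exact hfixcard
    have heq := Set.eq_of_subset_of_ncard_le hsub (by omega) (Set.toFinite _)
    have : c ∈ Set.range (fun x : F => B.eval x) := by rw [heq]; exact hc
    exact this
  -- a nonzero kernel element
  obtain ⟨β, hβ0, hβne⟩ : ∃ β : F, B.eval β = 0 ∧ β ≠ 0 := by
    by_contra hno
    push_neg at hno
    have hbot : φ.ker = ⊥ := by
      rw [AddSubgroup.eq_bot_iff_forall]
      intro x hx
      by_contra hne
      exact hne (hno x (by simpa [AddMonoidHom.mem_ker, hφ] using hx))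
    have h2 : p ≤ p ^ (n - 1) := by
      calc p = p ^ 1 := (pow_one p).symm
        _ ≤ p ^ (n - 1) := Nat.pow_le_pow_right hp.pos (by omega)
    rw [hbot] at hKge
    simp [AddSubgroup.card_bot] at hKge
    omega
  constructor
  · -- h has no roots in F_p
    intro c hc hcz
    obtain ⟨α, hα⟩ := hsurj c hc
    have key : (fun x : F => g.eval (B.eval x) + h.eval (B.eval x) * A.eval x) (α + β)
        = (fun x : F => g.eval (B.eval x) + h.eval (B.eval x) * A.eval x) α := by
      simp only
      rw [hBadd, hβ0, add_zero, hα, hcz]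
      ring
    have := hf.injective key
    exact hβne (add_eq_left.mp this)
  · -- A injective on ker B
    intro x hx y hy hxy
    simp only [Set.mem_setOf_eq] at hx hy
    simp only at hxy
    apply hf.injective
    simp only
    rw [hx, hy, hxy]
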